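/- arXiv:math/9902072 — 2 statements merged into one kernel-verified Lean document; each statement's English description precedes it below -/
import Mathlib

section
/- For every Young diagram λ inside the k×(n−k) rectangle, the length (number of inversions) of the permutation w_λ equals |λ|; equivalently, the defining expression of w_λ as a product of |λ| adjacent transpositions is a reduced word. -/
open scoped Classical

set_option maxHeartbeats 1000000
set_option synthInstance.maxHeartbeats 1000000

noncomputable section

/-- The field ℚ(v) of rational functions. -/
abbrev F : Type := RatFunc ℚ

/-- The variable v. -/
def v : F := RatFunc.X

/-- The quantum integer [r] = (v^r - v^{-r})/(v - v^{-1}). -/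
def qint (r : ℕ) : F := (v ^ r - v⁻¹ ^ r) / (v - v⁻¹)

/-- Sequences of n signs (`true` = `+`) with exactly k pluses. -/
abbrev Stt (n k : ℕ) := {ε : Fin n → Bool // (Finset.univ.filter fun t => ε t = true).card = k}

/-- The adjacent transposition s_m ∈ S_n (1-based: swaps positions m and m+1). -/
def sperm (n m : ℕ) : Equiv.Perm (Fin n) :=
  if h : 1 ≤ m ∧ m < n then Equiv.swap ⟨m - 1, by omega⟩ ⟨m, h.2⟩ else 1

/-- Action of w ∈ S_n on sequences: (w·ε)_{w(t)} = ε_t. -/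
def actE {n : ℕ} (w : Equiv.Perm (Fin n)) (ε : Fin n → Bool) : Fin n → Bool :=
  fun u => ε (w⁻¹ u)

lemma card_actE {n k : ℕ} (w : Equiv.Perm (Fin n)) (ε : Fin n → Bool)
    (h : (Finset.univ.filter fun t => ε t = true).card = k) :
    (Finset.univ.filter fun t => actE w ε t = true).card = k := by
  rw [← h]
  apply Finset.card_bij (fun t _ => w⁻¹ t)
  · intro a ha
    simp only [Finset.mem_filter, Finset.mem_univ, true_and, actE] at ha ⊢
    exact (Finset.mem_filter.mp ha).2
  · intro a _ b _ hab
    exact (Equiv.injective _) hab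
  · intro b hb
    simp only [Finset.mem_filter, Finset.mem_univ, true_and, actE] at hb ⊢
    exact ⟨w b, Finset.mem_filter.mpr ⟨Finset.mem_univ _, by simpa [actE] using hb⟩, by simp⟩

/-- Action of S_n on the set E of sequences with k pluses. -/
def actS {n k : ℕ} (w : Equiv.Perm (Fin n)) (ε : Stt n k) : Stt n k :=
  ⟨actE w ε.1, card_actE w ε.1 ε.2⟩

/-- The module M, free over ℚ(v) with basis E. -/
abbrev M (n k : ℕ) := Stt n k → F

/-- The basis vector of M corresponding to ε ∈ E. -/
def bv {n k : ℕ} (ε : Stt n k) : M n k := Pi.single ε 1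

/-- The sequence 𝟏 = (+,…,+,−,…,−) (k pluses then n−k minuses). -/
def oneSeq (n k : ℕ) : Fin n → Bool := fun t => decide ((t : ℕ) < k)

lemma card_oneSeq (n k : ℕ) (h : k ≤ n) :
    (Finset.univ.filter fun t => oneSeq n k t = true).card = k := by
  have : (Finset.univ.filter fun t => oneSeq n k t = true)
      = Finset.univ.map (Fin.castLEEmb h) := by
    ext t
    simp only [Finset.mem_filter, Finset.mem_univ, true_and, oneSeq, decide_eq_true_eq,
      Finset.mem_map]
    constructor
    · intro ht; exact ⟨⟨t, ht⟩, rfl⟩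
    · rintro ⟨s, rfl⟩; exact s.2
  rw [this, Finset.card_map, Finset.card_univ, Fintype.card_fin]

/-- 𝟏 as an element of E. -/
def oneS (n k : ℕ) (h : k ≤ n) : Stt n k := ⟨oneSeq n k, card_oneSeq n k h⟩

/-- The operator T_m on M (1 ≤ m ≤ n−1), defined on basis elements. -/
def Thk (n k : ℕ) (m : ℕ) : M n k →ₗ[F] M n k :=
  (Pi.basisFun F (Stt n k)).constr ℕ fun ε =>
    if h : 1 ≤ m ∧ m < n then
      let a := ε.1 ⟨m - 1, by omega⟩
      let b := ε.1 ⟨m, h.2⟩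
      if a = true ∧ b = false then bv (actS (sperm n m) ε)
      else if a = b then (-v⁻¹) • bv ε
      else bv (actS (sperm n m) ε) + (v - v⁻¹) • bv ε
    else 0

/-- A Young diagram inside the k×(n−k) rectangle, given by its row lengths
(1-based: row i has lam i boxes). -/
def IsYoung (n k : ℕ) (lam : ℕ → ℕ) : Prop :=
  (∀ i, 1 ≤ i → lam (i + 1) ≤ lam i) ∧ lam 1 ≤ n - k ∧ (∀ i, k < i → lam i = 0)

/-- The boxes of λ, listed row by row from the bottom row to the top row,
each row from its last box to its first (so box (1,1) comes last). -/
def boxList (k : ℕ) (lam : ℕ → ℕ) : List (ℕ × ℕ) :=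
  ((List.range k).reverse.map fun i' =>
    (List.range (lam (i' + 1))).reverse.map fun j' => (i' + 1, j' + 1)).flatten

/-- The word of w_λ: letter k+j−i for box (i,j). -/
def wword (k : ℕ) (lam : ℕ → ℕ) : List ℕ := (boxList k lam).map fun b => k + b.2 - b.1

/-- The permutation w_λ = ∏_{(i,j)∈λ} s_{k+j−i} (box (1,1) rightmost). -/
def wperm (n k : ℕ) (lam : ℕ → ℕ) : Equiv.Perm (Fin n) := ((wword k lam).map (sperm n)).prod

/-- w_λ·𝟏 as an element of E. -/
def wSt (n k : ℕ) (h : k ≤ n) (lam : ℕ → ℕ) : Stt n k := actS (wperm n k lam) (oneS n k h)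

/-- r is the system of shifts of λ: r_{ij} = max(r_{i,j+1}, r_{i+1,j}) + 1 on boxes of λ,
and r_{ij} = 0 off λ. -/
def IsShifts (lam : ℕ → ℕ) (r : ℕ → ℕ → ℕ) : Prop :=
  ∀ i j, r i j = if 1 ≤ i ∧ 1 ≤ j ∧ j ≤ lam i then max (r i (j + 1)) (r (i + 1) j) + 1 else 0

/-- The operator X_λ = ∏_{(i,j)∈λ} (T_{k+j−i} − v^{r_{ij}}/[r_{ij}]), the factor of
box (1,1) applied first. -/
def Xop (n k : ℕ) (lam : ℕ → ℕ) (r : ℕ → ℕ → ℕ) : Module.End F (M n k) :=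
  ((boxList k lam).map fun b =>
    (Thk n k (k + b.2 - b.1) - (v ^ r b.1 b.2 / qint (r b.1 b.2)) • (1 : Module.End F (M n k)) : Module.End F (M n k))).prod

/-- O(v^m): rational functions with a zero of order ≥ m at v = 0. -/
def Ozero (m : ℕ) : Set F :=
  {f | ∃ p q : Polynomial ℚ, Polynomial.eval 0 q ≠ 0 ∧
        f = v ^ m * (algebraMap (Polynomial ℚ) F p / algebraMap (Polynomial ℚ) F q)}

/-- Value of a sequence at the 1-based position t. -/
def posVal {n : ℕ} (ε : Fin n → Bool) (t : ℕ) : Bool :=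
  if h : 1 ≤ t ∧ t ≤ n then ε ⟨t - 1, by omega⟩ else false

/-- a(i) = k + λ_i − i + 1 for 1 ≤ i ≤ k, and a(i) = 0 for i > k. -/
def aF (k : ℕ) (lam : ℕ → ℕ) (i : ℕ) : ℕ := if i ≤ k then k + lam i + 1 - i else 0

/-- The contribution r_t(ε) to the weight. -/
def weightT (k : ℕ) (lam : ℕ → ℕ) (r : ℕ → ℕ → ℕ) {n : ℕ} (ε : Fin n → Bool) (t : ℕ) : ℕ :=
  ∑ i ∈ Finset.Icc 1 k,
    ((if posVal ε t = false ∧ 1 ≤ lam i ∧ t = aF k lam i then r i (lam i) - 1 else 0) +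
     (if posVal ε t = true ∧ aF k lam (i + 1) < t ∧ t < aF k lam i then r i (t + i - k) else 0))

/-- The weight r_λ(ε) = Σ_{t=1}^n r_t(ε). -/
def weight (n k : ℕ) (lam : ℕ → ℕ) (r : ℕ → ℕ → ℕ) (ε : Fin n → Bool) : ℕ :=
  ∑ t ∈ Finset.Icc 1 n, weightT k lam r ε t

/-- 𝓛_λ = Σ_ε O(v^{r_λ(ε)}) ε. -/
def Lset (n k : ℕ) (lam : ℕ → ℕ) (r : ℕ → ℕ → ℕ) : Set (M n k) :=
  {m | ∀ ε : Stt n k, m ε ∈ Ozero (weight n k lam r ε.1)}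

/-- The length (number of inversions) of a permutation. -/
def len {n : ℕ} (w : Equiv.Perm (Fin n)) : ℕ :=
  (Finset.univ.filter fun p : Fin n × Fin n => p.1 < p.2 ∧ w p.2 < w p.1).card

/-- The parabolic subgroup W_J = S_k × S_{n−k}: permutations mapping {1,…,k} to itself. -/
def WJ (n k : ℕ) : Set (Equiv.Perm (Fin n)) :=
  {σ | ∀ t : Fin n, (t : ℕ) < k → ((σ t : ℕ) < k)}

/-- W^J: permutations of minimal length in their coset w·W_J. -/
def Wmin (n k : ℕ) : Set (Equiv.Perm (Fin n)) :=
  {w | ∀ σ ∈ WJ n k, len w ≤ len (w * σ)}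

/-- The variable x_p (1-based position p) in ℚ(v)[x_1,…,x_n]. -/
def xv (n p : ℕ) : MvPolynomial (Fin n) F :=
  if h : 1 ≤ p ∧ p ≤ n then MvPolynomial.X ⟨p - 1, by omega⟩ else 0

/-- Exchange of the variables x_i and x_{i+1} (1-based, 1 ≤ i ≤ n−1). -/
def swapf (n i : ℕ) (f : MvPolynomial (Fin n) F) : MvPolynomial (Fin n) F :=
  if h : 1 ≤ i ∧ i < n then
    MvPolynomial.rename (Equiv.swap ⟨i - 1, by omega⟩ ⟨i, h.2⟩) f
  else f

/-- The divided difference ∂_i f = (f − s_i f)/(x_i − x_{i+1}). -/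
def ddiff (n i : ℕ) (f : MvPolynomial (Fin n) F) : MvPolynomial (Fin n) F :=
  if h : ∃ g, f - swapf n i f = (xv n i - xv n (i + 1)) * g then h.choose else 0

/-- The operator ∇_i f = (v x_{i+1} − v⁻¹ x_i)·∂_i f. -/
def nabla (n i : ℕ) (f : MvPolynomial (Fin n) F) : MvPolynomial (Fin n) F :=
  (MvPolynomial.C v * xv n (i + 1) - MvPolynomial.C v⁻¹ * xv n i) * ddiff n i f

/-- Parenthesis matching: minuses (`false`) are openers, pluses (`true`) are closers;
each plus is matched with the most recent unmatched minus, i.e. each minus with the first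
subsequent unmatched plus.  Returns the list of matched pairs (p,q) of 1-based positions
and the list of unmatched minus positions. -/
def matchAux : List Bool → ℕ → List ℕ → List (ℕ × ℕ) × List ℕ
  | [], _, stack => ([], stack)
  | b :: rest, pos, stack =>
    if b then
      match stack with
      | [] => matchAux rest (pos + 1) []
      | p :: stack' =>
        let res := matchAux rest (pos + 1) stack'
        ((p, pos) :: res.1, res.2)
    else matchAux rest (pos + 1) (pos :: stack)

/-- d(ε) = #{(p,q) : p < q, ε_p = −, ε_q = +}. -/
def dstat {n : ℕ} (ε : Fin n → Bool) : ℕ :=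
  (Finset.univ.filter fun pq : Fin n × Fin n =>
    pq.1 < pq.2 ∧ ε pq.1 = false ∧ ε pq.2 = true).card

/-- The polynomial Q_ε. -/
def Qpoly (n : ℕ) (ε : Fin n → Bool) : MvPolynomial (Fin n) F :=
  MvPolynomial.C (v⁻¹ ^ dstat ε) *
    ((matchAux (List.ofFn ε) 1 []).1.map fun pq =>
        xv n pq.1 - MvPolynomial.C (v ^ (pq.2 + 1 - pq.1)) * xv n pq.2).prod *
    ((matchAux (List.ofFn ε) 1 []).2.map fun p => xv n p).prod

/-- The operator T_m on M′ (the parabolic module induced from T_j ↦ v). -/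
def Thk' (n k : ℕ) (m : ℕ) : M n k →ₗ[F] M n k :=
  (Pi.basisFun F (Stt n k)).constr ℕ fun ε =>
    if h : 1 ≤ m ∧ m < n then
      let a := ε.1 ⟨m - 1, by omega⟩
      let b := ε.1 ⟨m, h.2⟩
      if a = true ∧ b = false then bv (actS (sperm n m) ε)
      else if a = b then v • bv ε
      else bv (actS (sperm n m) ε) + (v - v⁻¹) • bv ε
    else 0

/-- The map Φ : M′ → ℚ(v)[x_1,…,x_n], ε ↦ v^{−d(ε)} ∏_{t : ε_t = −} x_t. -/
def Phi (n k : ℕ) : M n k →ₗ[F] MvPolynomial (Fin n) F :=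
  (Pi.basisFun F (Stt n k)).constr ℕ fun ε =>
    MvPolynomial.C (v⁻¹ ^ dstat ε.1) *
      ∏ t ∈ Finset.univ.filter (fun t => ε.1 t = false), MvPolynomial.X t

/-- The space P(k,n): polynomials homogeneous of total degree n−k, of degree ≤ 1 in each
variable. -/
def Pspace (n k : ℕ) : Set (MvPolynomial (Fin n) F) :=
  {f | f.IsHomogeneous (n - k) ∧ ∀ t : Fin n, f.degreeOf t ≤ 1}


lemma aux_swap_lt {n : ℕ} (x y : Fin n) (hxy : (y:ℕ) = (x:ℕ) + 1) (c d : Fin n)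
    (hcd : c < d) (hne : ¬(c = x ∧ d = y)) :
    Equiv.swap x y c < Equiv.swap x y d := by
  rw [Equiv.swap_apply_def, Equiv.swap_apply_def]
  split_ifs <;>
    (simp only [Fin.lt_def, Fin.ext_iff, not_and] at hcd hne ⊢ <;> omega)

lemma aux_len_one {n : ℕ} : len (1 : Equiv.Perm (Fin n)) = 0 := by
  rw [len, Finset.card_eq_zero, Finset.filter_eq_empty_iff]
  rintro ⟨p, q⟩ -
  simp only [Equiv.Perm.one_apply]
  rintro ⟨h1, h2⟩
  exact absurd h1 (not_lt.2 h2.le)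

lemma aux_len_swap_mul {n : ℕ} (x y : Fin n) (hxy : (y:ℕ) = (x:ℕ) + 1)
    (w : Equiv.Perm (Fin n)) (h : w⁻¹ x < w⁻¹ y) :
    len (Equiv.swap x y * w) = len w + 1 := by
  have hwx : w (w⁻¹ x) = x := Equiv.apply_symm_apply w x
  have hwy : w (w⁻¹ y) = y := Equiv.apply_symm_apply w y
  have hset : (Finset.univ.filter fun p : Fin n × Fin n =>
      p.1 < p.2 ∧ (Equiv.swap x y * w) p.2 < (Equiv.swap x y * w) p.1)
      = insert (w⁻¹ x, w⁻¹ y)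
        (Finset.univ.filter fun p : Fin n × Fin n => p.1 < p.2 ∧ w p.2 < w p.1) := by
    ext ⟨p, q⟩
    rw [Finset.mem_filter]
    simp only [Finset.mem_filter, Finset.mem_insert, Finset.mem_univ, true_and,
      Equiv.Perm.mul_apply, Prod.mk.injEq]
    constructor
    · rintro ⟨hpq, hlt⟩
      by_cases hc : p = w⁻¹ x ∧ q = w⁻¹ y
      · exact Or.inl hc
      · refine Or.inr ⟨hpq, ?_⟩
        rcases lt_trichotomy (w q) (w p) with h1 | h1 | h1
        · exact h1
        · exact absurd (w.injective h1) (by rintro rfl; exact absurd hpq (lt_irrefl _))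
        · exfalso
          have : ¬(w p = x ∧ w q = y) := by
            rintro ⟨h2, h3⟩
            exact hc ⟨by rw [← h2, Equiv.Perm.inv_def, Equiv.symm_apply_apply],
              by rw [← h3, Equiv.Perm.inv_def, Equiv.symm_apply_apply]⟩
          exact absurd (aux_swap_lt x y hxy (w p) (w q) h1 this) (not_lt.2 hlt.le)
    · rintro (⟨rfl, rfl⟩ | ⟨hpq, hlt⟩)
      · refine ⟨h, ?_⟩
        rw [hwx, hwy, Equiv.swap_apply_left, Equiv.swap_apply_right]
        simp [Fin.lt_def, hxy]
      · refine ⟨hpq, ?_⟩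
        apply aux_swap_lt x y hxy (w q) (w p) hlt
        rintro ⟨h2, h3⟩
        have hq1 : q = w⁻¹ x := by rw [← h2, Equiv.Perm.inv_def, Equiv.symm_apply_apply]
        have hq2 : p = w⁻¹ y := by rw [← h3, Equiv.Perm.inv_def, Equiv.symm_apply_apply]
        rw [hq1, hq2] at hpq
        exact absurd (hpq.trans h) (lt_irrefl _)
  rw [len, hset, Finset.card_insert_of_notMem, len]
  simp only [Finset.mem_filter, Finset.mem_univ, true_and, not_and, hwx, hwy]
  intro _
  simp [Fin.lt_def, hxy]

lemma aux_boxList_eq_nil (k : ℕ) (lam : ℕ → ℕ) (h : ∀ i, 1 ≤ i → i ≤ k → lam i = 0) :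
    boxList k lam = [] := by
  rw [boxList, List.flatten_eq_nil_iff]
  intro l hl
  simp only [List.mem_map, List.mem_reverse, List.mem_range] at hl
  obtain ⟨i', hi', rfl⟩ := hl
  rw [h (i'+1) (by omega) (by omega)]
  rfl

lemma aux_boxList_trunc (k : ℕ) (lam : ℕ → ℕ) (i0 : ℕ) (h2 : i0 ≤ k)
    (h4 : ∀ i, i0 < i → lam i = 0) :
    boxList k lam = boxList i0 lam := by
  rw [boxList, boxList]
  have hk : k = i0 + (k - i0) := by omega
  rw [hk, List.range_add, List.reverse_append, List.map_append, List.flatten_append]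
  have hnil : ((List.map (i0 + ·) (List.range (k - i0))).reverse.map fun i' =>
      (List.range (lam (i' + 1))).reverse.map fun j' => (i' + 1, j' + 1)).flatten = [] := by
    rw [List.flatten_eq_nil_iff]
    intro l hl
    simp only [List.mem_map, List.mem_reverse, List.mem_range] at hl
    obtain ⟨i', ⟨j, hj, rfl⟩, rfl⟩ := hl
    rw [h4 (i0 + j + 1) (by omega)]
    rfl
  rw [hnil, List.nil_append]

lemma aux_boxList_cons (k : ℕ) (lam : ℕ → ℕ) (i0 : ℕ) (h1 : 1 ≤ i0) (h2 : i0 ≤ k)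
    (h3 : 1 ≤ lam i0) (h4 : ∀ i, i0 < i → lam i = 0) :
    boxList k lam = (i0, lam i0) :: boxList k (fun i => if i = i0 then lam i0 - 1 else lam i) := by
  rw [aux_boxList_trunc k lam i0 h2 h4,
      aux_boxList_trunc k _ i0 h2 (fun i hi => by rw [if_neg (by omega)]; exact h4 i hi)]
  obtain ⟨i1, rfl⟩ : ∃ i1, i0 = i1 + 1 := ⟨i0 - 1, by omega⟩
  obtain ⟨l, hl⟩ : ∃ l, lam (i1 + 1) = l + 1 := ⟨lam (i1+1) - 1, by omega⟩
  rw [boxList, boxList, List.range_succ, List.reverse_append, List.map_append,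
    List.flatten_append]
  simp only [List.reverse_singleton, List.map_cons, List.map_nil, List.flatten_cons,
    List.flatten_nil, List.append_nil, if_pos rfl, hl, Nat.add_sub_cancel]
  rw [List.range_succ, List.reverse_append]
  simp only [List.reverse_singleton, List.singleton_append, List.map_cons, List.cons_append]
  congr 1
  simp only [List.nil_append, List.flatten_cons, if_true]
  congr 1
  refine congrArg List.flatten ?_
  apply List.map_congr_left
  intro i' hi'
  simp only [List.mem_reverse, List.mem_range] at hi'
  rw [if_neg (by omega)]

lemma aux_young_mono {n k : ℕ} {lam : ℕ → ℕ} (hY : IsYoung n k lam) :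
    ∀ i j, 1 ≤ i → i ≤ j → lam j ≤ lam i := by
  intro i j h1 h2
  induction j, h2 using Nat.le_induction with
  | base => exact le_refl _
  | succ j hj ih => exact (hY.1 j (by omega)).trans ih

lemma aux_main (n k : ℕ) (hk : 0 < k) (hkn : k < n) :
    ∀ N : ℕ, ∀ lam : ℕ → ℕ, IsYoung n k lam → (∑ i ∈ Finset.Icc 1 k, lam i) = N →
    len (wperm n k lam) = N ∧ (wword k lam).length = N ∧
    (∀ p : Fin n, (p:ℕ) < k → ((wperm n k lam) p : ℕ) = (p:ℕ) + lam (k - (p:ℕ))) ∧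
    (∀ p q : Fin n, k ≤ (p:ℕ) → p < q → wperm n k lam p < wperm n k lam q) := by
  intro N
  induction N with
  | zero =>
    intro lam hY hsum
    have hz : ∀ i, 1 ≤ i → i ≤ k → lam i = 0 := by
      intro i h1 h2
      exact (Finset.sum_eq_zero_iff.mp hsum) i (Finset.mem_Icc.mpr ⟨h1, h2⟩)
    have hbox : boxList k lam = [] := aux_boxList_eq_nil k lam hz
    have hw : wword k lam = [] := by rw [wword, hbox]; rfl
    have hperm : wperm n k lam = 1 := by rw [wperm, hw]; rfl
    refine ⟨by rw [hperm, aux_len_one], by rw [hw]; rfl, ?_, ?_⟩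
    · intro p hp
      rw [hperm, Equiv.Perm.one_apply, hz (k - p) (by omega) (by omega)]
      omega
    · intro p q _ hpq
      rw [hperm, Equiv.Perm.one_apply, Equiv.Perm.one_apply]
      exact hpq
  | succ N ih =>
    intro lam hY hsum
    have hbd : ∀ i, 1 ≤ i → lam i ≤ n - k := fun i hi =>
      (aux_young_mono hY 1 i le_rfl hi).trans hY.2.1
    set S := (Finset.Icc 1 k).filter (fun i => 1 ≤ lam i) with hS
    have hSne : S.Nonempty := by
      by_contra h
      rw [Finset.not_nonempty_iff_eq_empty] at h
      have hz : ∑ i ∈ Finset.Icc 1 k, lam i = 0 := Finset.sum_eq_zero (fun i hi => by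
        by_contra hlam
        have hmem : i ∈ S := Finset.mem_filter.mpr ⟨hi, by omega⟩
        rw [h] at hmem
        exact absurd hmem (Finset.notMem_empty i))
      omega
    set i0 := S.max' hSne with hi0def
    have hi0S : i0 ∈ S := S.max'_mem hSne
    rw [hS, Finset.mem_filter, Finset.mem_Icc] at hi0S
    obtain ⟨⟨hi01, hi0k⟩, hi0pos⟩ := hi0S
    have h4 : ∀ i, i0 < i → lam i = 0 := by
      intro i hi
      by_cases hik : i ≤ k
      · by_contra h
        have hmem : i ∈ S := Finset.mem_filter.mpr ⟨Finset.mem_Icc.mpr ⟨by omega, hik⟩, by omega⟩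
        exact absurd (S.le_max' i hmem) (by omega)
      · exact hY.2.2 i (by omega)
    set lam' := fun i => if i = i0 then lam i0 - 1 else lam i with hlam'
    have hlam'i0 : lam' i0 = lam i0 - 1 := if_pos rfl
    have hlam'ne : ∀ i, i ≠ i0 → lam' i = lam i := fun i hi => if_neg hi
    have hY' : IsYoung n k lam' := by
      refine ⟨?_, ?_, ?_⟩
      · intro i hi
        by_cases h2 : i = i0
        · rw [hlam'ne (i+1) (by omega), h2, hlam'i0, h4 (i0+1) (by omega)]
          omega
        · by_cases h1 : i + 1 = i0
          · rw [hlam'ne i h2, h1, hlam'i0]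
            have hmono := hY.1 i hi
            rw [h1] at hmono
            omega
          · rw [hlam'ne (i+1) h1, hlam'ne i h2]
            exact hY.1 i hi
      · by_cases h1 : 1 = i0
        · rw [← h1] at hlam'i0
          rw [hlam'i0]
          have hb := hY.2.1
          omega
        · rw [hlam'ne 1 (by omega)]
          exact hY.2.1
      · intro i hi
        rw [hlam'ne i (by omega)]
        exact hY.2.2 i hi
    have hi0mem : i0 ∈ Finset.Icc 1 k := Finset.mem_Icc.mpr ⟨hi01, hi0k⟩
    have hsum' : ∑ i ∈ Finset.Icc 1 k, lam' i = N := by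
      have e1 : lam' i0 + ∑ i ∈ (Finset.Icc 1 k).erase i0, lam' i
          = ∑ i ∈ Finset.Icc 1 k, lam' i := Finset.add_sum_erase _ lam' hi0mem
      have e2 : lam i0 + ∑ i ∈ (Finset.Icc 1 k).erase i0, lam i
          = ∑ i ∈ Finset.Icc 1 k, lam i := Finset.add_sum_erase _ lam hi0mem
      have e3 : ∑ i ∈ (Finset.Icc 1 k).erase i0, lam' i
          = ∑ i ∈ (Finset.Icc 1 k).erase i0, lam i :=
        Finset.sum_congr rfl (fun i hi => hlam'ne i (Finset.mem_erase.mp hi).1)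
      omega
    obtain ⟨hlen', hword', hfst', hsnd'⟩ := ih lam' hY' hsum'
    set m := k + lam i0 - i0 with hm
    have hm1 : 1 ≤ m := by omega
    have hmn : m < n := by
      have := hbd i0 hi01
      omega
    have hword : wword k lam = m :: wword k lam' := by
      rw [wword, aux_boxList_cons k lam i0 hi01 hi0k hi0pos h4, List.map_cons, ← wword]
    have hperm : wperm n k lam = sperm n m * wperm n k lam' := by
      rw [wperm, hword, List.map_cons, List.prod_cons, ← wperm]
    set x : Fin n := ⟨m - 1, by omega⟩ with hx
    set y : Fin n := ⟨m, hmn⟩ with hy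
    have hxy : (y : ℕ) = (x : ℕ) + 1 := by simp [hx, hy]; omega
    have hsperm : sperm n m = Equiv.swap x y := by rw [sperm, dif_pos ⟨hm1, hmn⟩]
    set w' := wperm n k lam' with hw'
    set p0 : Fin n := ⟨k - i0, by omega⟩ with hp0
    have hki0 : k - (k - i0) = i0 := by omega
    have hw'p0 : w' p0 = x := by
      apply Fin.ext
      rw [hfst' p0 (by simp [hp0]; omega)]
      simp only [hp0, hx, hki0, hlam'i0]
      omega
    have hinv_x : w'⁻¹ x = p0 := by rw [← hw'p0, Equiv.Perm.inv_def, Equiv.symm_apply_apply]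
    have hinvlt : w'⁻¹ x < w'⁻¹ y := by
      rw [hinv_x]
      set q0 := w'⁻¹ y with hq0
      have hw'q0 : w' q0 = y := Equiv.apply_symm_apply w' y
      rcases lt_trichotomy p0 q0 with h | h | h
      · exact h
      · exfalso
        rw [← h, hw'p0] at hw'q0
        rw [hx, hy, Fin.ext_iff] at hw'q0
        simp at hw'q0
        omega
      · exfalso
        have hq0k : (q0 : ℕ) < k := by
          have : (p0 : ℕ) = k - i0 := rfl
          have := h
          rw [Fin.lt_def] at this
          omega
        have hval := hfst' q0 hq0k
        rw [hw'q0] at hval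
        have hkq0 : i0 < k - (q0 : ℕ) := by
          rw [Fin.lt_def] at h
          simp only [hp0] at h
          omega
        rw [hlam'ne _ (by omega), h4 _ hkq0] at hval
        simp only [hy] at hval
        omega
    have hlen : len (wperm n k lam) = N + 1 := by
      rw [hperm, hsperm, hw', aux_len_swap_mul x y hxy _ hinvlt, hlen']
    refine ⟨hlen, by rw [hword, List.length_cons, hword'], ?_, ?_⟩
    · intro p hp
      rw [hperm, hsperm, Equiv.Perm.mul_apply]
      by_cases hpp0 : p = p0
      · subst hpp0
        rw [hw'p0, Equiv.swap_apply_left]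
        simp only [hy, hp0, hki0]
        omega
      · have h1 : w' p ≠ x := fun h => hpp0 (by rw [← hinv_x, ← h, Equiv.Perm.inv_def, Equiv.symm_apply_apply])
        have hpval : (p : ℕ) ≠ k - i0 := fun h => hpp0 (Fin.ext h)
        have h2 : w' p ≠ y := by
          intro h
          have hval : (w' p : ℕ) = m := by rw [h]
          rw [hfst' p hp] at hval
          by_cases hple : (p : ℕ) < k - i0
          · rw [hlam'ne _ (by omega), h4 _ (by omega)] at hval
            omega
          · have hi : k - (p : ℕ) < i0 := by omega
            have hi1 : 1 ≤ k - (p : ℕ) := by omega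
            have hmono : lam i0 ≤ lam (k - (p : ℕ)) := aux_young_mono hY _ i0 hi1 (by omega)
            rw [hlam'ne _ (by omega)] at hval
            omega
        rw [Equiv.swap_apply_of_ne_of_ne h1 h2, hfst' p hp, hlam'ne _ (by omega)]
    · intro p q hp hpq
      rw [hperm, hsperm, Equiv.Perm.mul_apply, Equiv.Perm.mul_apply]
      have hxval : (x : ℕ) = m - 1 := rfl
      have hne_x : ∀ r : Fin n, k ≤ (r : ℕ) → w' r ≠ x := by
        intro r hr h
        have : r = p0 := by rw [← hinv_x, ← h, Equiv.Perm.inv_def, Equiv.symm_apply_apply]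
        rw [this] at hr
        simp only [hp0] at hr
        omega
      have hlt := hsnd' p q hp hpq
      by_cases h1 : w' p = y
      · rw [h1, Equiv.swap_apply_right]
        have h2 : w' q ≠ y := by
          intro h
          exact absurd (w'.injective (h1.trans h.symm)) (by intro hh; rw [hh] at hpq; exact lt_irrefl _ hpq)
        rw [Equiv.swap_apply_of_ne_of_ne (hne_x q (by omega)) h2]
        have hyq : y < w' q := h1 ▸ hlt
        have hxy' : x < y := by rw [Fin.lt_def]; omega
        exact hxy'.trans hyq
      · by_cases h2 : w' q = y
        · rw [h2, Equiv.swap_apply_right, Equiv.swap_apply_of_ne_of_ne (hne_x p hp) h1]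
          have hwpy : w' p < y := h2 ▸ hlt
          rw [Fin.lt_def] at hwpy ⊢
          have : (w' p : ℕ) ≠ (x : ℕ) := fun h => (hne_x p hp) (Fin.ext h)
          simp only [hy] at hwpy
          omega
        · rw [Equiv.swap_apply_of_ne_of_ne (hne_x p hp) h1,
            Equiv.swap_apply_of_ne_of_ne (hne_x q (by omega)) h2]
          exact hlt


/-- The number of inversions of w_λ equals |λ|; equivalently, the
defining word of w_λ (of length |λ|) is reduced. -/
theorem wperm_length (n k : ℕ) (hk : 0 < k) (hkn : k < n)
    (lam : ℕ → ℕ) (hY : IsYoung n k lam) :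
    len (wperm n k lam) = ∑ i ∈ Finset.Icc 1 k, lam i ∧
    (wword k lam).length = ∑ i ∈ Finset.Icc 1 k, lam i := by
  obtain ⟨h1, h2, -, -⟩ := aux_main n k hk hkn (∑ i ∈ Finset.Icc 1 k, lam i) lam hY rfl
  exact ⟨h1, h2⟩

end
end

section
/- Every nonempty Young diagram λ inside the k×(n−k) rectangle can be written as a disjoint union of box sets λ = λ′ ⊔ μ, where λ′ is a Young diagram, μ is a nonempty rectangle (i.e. μ = {(i,j) : i₁ ≤ i ≤ i₂, j₁ ≤ j ≤ j₂} for some i₁ ≤ i₂ and j₁ ≤ j₂), and for every box (i,j) of λ′ the shift of λ′ at (i,j) equals the shift of λ at (i,j). -/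
open scoped Classical

set_option maxHeartbeats 1000000
set_option synthInstance.maxHeartbeats 1000000

noncomputable section

lemma lam_anti {lam : ℕ → ℕ} (h1 : ∀ i, 1 ≤ i → lam (i + 1) ≤ lam i)
    {i i' : ℕ} (hi : 1 ≤ i) (hii : i ≤ i') : lam i' ≤ lam i := by
  induction i', hii using Nat.le_induction with
  | base => exact le_rfl
  | succ m hm ih => exact le_trans (h1 m (by omega)) ih

/-- Closed formula for the shifts. -/
def Rsh (k : ℕ) (lam : ℕ → ℕ) (i j : ℕ) : ℕ :=
  if 1 ≤ i ∧ 1 ≤ j then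
    ((Finset.Icc i k).filter fun i' => j ≤ lam i').sup fun i' => i' + lam i' + 1 - i - j
  else 0

lemma le_Rsh (k : ℕ) (lam : ℕ → ℕ) {i j i' : ℕ} (hi : 1 ≤ i) (hj : 1 ≤ j)
    (h1 : i ≤ i') (h2 : i' ≤ k) (h3 : j ≤ lam i') :
    i' + lam i' + 1 - i - j ≤ Rsh k lam i j := by
  rw [Rsh, if_pos ⟨hi, hj⟩]
  exact Finset.le_sup (f := fun i' => i' + lam i' + 1 - i - j)
    (Finset.mem_filter.mpr ⟨Finset.mem_Icc.mpr ⟨h1, h2⟩, h3⟩)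

lemma Rsh_le (k : ℕ) (lam : ℕ → ℕ) {i j m : ℕ}
    (h : ∀ i', i ≤ i' → i' ≤ k → j ≤ lam i' → i' + lam i' + 1 - i - j ≤ m) :
    Rsh k lam i j ≤ m := by
  rw [Rsh]
  split
  · exact Finset.sup_le fun i' hi' => by
      simp only [Finset.mem_filter, Finset.mem_Icc] at hi'
      exact h i' hi'.1.1 hi'.1.2 hi'.2
  · exact Nat.zero_le m

lemma Rsh_step (k : ℕ) (lam : ℕ → ℕ) {i j i0 j0 : ℕ} (hi0 : 1 ≤ i0) (hj0 : 1 ≤ j0)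
    (hii : i0 ≤ i) (hjj : j0 ≤ j) (hlt : i0 + j0 < i + j) (hpos : 1 ≤ Rsh k lam i0 j0) :
    Rsh k lam i j + 1 ≤ Rsh k lam i0 j0 := by
  have h : Rsh k lam i j ≤ Rsh k lam i0 j0 - 1 := by
    apply Rsh_le
    intro i' h1 h2 h3
    have := le_Rsh k lam hi0 hj0 (le_trans hii h1) h2 (le_trans hjj h3)
    omega
  omega

lemma Rsh_shifts (k : ℕ) (lam : ℕ → ℕ)
    (h1 : ∀ i, 1 ≤ i → lam (i + 1) ≤ lam i) (h2 : ∀ i, k < i → lam i = 0) :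
    IsShifts lam (Rsh k lam) := by
  intro i j
  by_cases hbox : 1 ≤ i ∧ 1 ≤ j ∧ j ≤ lam i
  · rw [if_pos hbox]
    obtain ⟨hi, hj, hjl⟩ := hbox
    have hik : i ≤ k := by by_contra h; have := h2 i (by omega); omega
    have hR1 : 1 ≤ Rsh k lam i j := by
      have := le_Rsh k lam hi hj (le_refl i) hik hjl; omega
    have hub : Rsh k lam i j ≤ max (Rsh k lam i (j + 1)) (Rsh k lam (i + 1) j) + 1 := by
      apply Rsh_le
      intro i' hii' hik' hji'
      rcases Nat.lt_or_ge (lam i') (j + 1) with hc | hc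
      · rcases Nat.lt_or_ge i i' with hd | hd
        · have h3 := le_Rsh k lam (i := i + 1) (j := j) (by omega) hj (by omega) hik' hji'
          have h4 : Rsh k lam (i + 1) j ≤ max (Rsh k lam i (j + 1)) (Rsh k lam (i + 1) j) :=
            le_max_right _ _
          omega
        · omega
      · have h3 := le_Rsh k lam (i := i) (j := j + 1) hi (by omega) hii' hik' hc
        have h4 : Rsh k lam i (j + 1) ≤ max (Rsh k lam i (j + 1)) (Rsh k lam (i + 1) j) :=
          le_max_left _ _
        omega
    have hA : Rsh k lam i (j + 1) + 1 ≤ Rsh k lam i j :=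
      Rsh_step k lam hi hj le_rfl (by omega) (by omega) hR1
    have hB : Rsh k lam (i + 1) j + 1 ≤ Rsh k lam i j :=
      Rsh_step k lam hi hj (by omega) le_rfl (by omega) hR1
    rcases max_choice (Rsh k lam i (j + 1)) (Rsh k lam (i + 1) j) with h | h <;> omega
  · rw [if_neg hbox, Rsh]
    split
    · next hg =>
        have he : ((Finset.Icc i k).filter fun i' => j ≤ lam i') = ∅ := by
          apply Finset.filter_eq_empty_iff.mpr
          intro i' hi'
          simp only [Finset.mem_Icc] at hi'
          have := lam_anti h1 hg.1 hi'.1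
          omega
        rw [he, Finset.sup_empty]
        rfl
    · rfl

lemma shifts_unique {n k : ℕ} {lam : ℕ → ℕ} (hY : IsYoung n k lam)
    {r r2 : ℕ → ℕ → ℕ} (hr : IsShifts lam r) (hr2 : IsShifts lam r2) :
    ∀ i j, r i j = r2 i j := by
  obtain ⟨h1, _, h2⟩ := hY
  have key : ∀ t i j, k + lam 1 + 1 ≤ i + j + t → r i j = r2 i j := by
    intro t
    induction t with
    | zero =>
      intro i j hij
      rw [hr i j, hr2 i j]
      have hnb : ¬(1 ≤ i ∧ 1 ≤ j ∧ j ≤ lam i) := by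
        rintro ⟨hi, hj, hjl⟩
        have hik : i ≤ k := by by_contra h; have := h2 i (by omega); omega
        have := lam_anti h1 (le_refl 1) hi
        omega
      rw [if_neg hnb, if_neg hnb]
    | succ t ih =>
      intro i j hij
      rw [hr i j, hr2 i j]
      by_cases hbox : 1 ≤ i ∧ 1 ≤ j ∧ j ≤ lam i
      · rw [if_pos hbox, if_pos hbox, ih i (j + 1) (by omega), ih (i + 1) j (by omega)]
      · rw [if_neg hbox, if_neg hbox]
  intro i j
  exact key (k + lam 1 + 1) i j (by omega)

/-- Every nonempty Young diagram λ inside the k×(n−k) rectangle is a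
disjoint union λ = λ′ ⊔ μ of a Young diagram λ′ and a nonempty rectangle μ, such that
the shifts of λ′ agree with those of λ on every box of λ′. -/
theorem young_rectangle_decomposition (n k : ℕ) (hk : 0 < k) (hkn : k < n)
    (lam : ℕ → ℕ) (hY : IsYoung n k lam) (hne : ∃ i, 1 ≤ i ∧ 1 ≤ lam i) :
    ∃ lam' : ℕ → ℕ, ∃ i1 i2 j1 j2 : ℕ,
      IsYoung n k lam' ∧ 1 ≤ i1 ∧ i1 ≤ i2 ∧ 1 ≤ j1 ∧ j1 ≤ j2 ∧
      (∀ p : ℕ × ℕ,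
        (1 ≤ p.1 ∧ 1 ≤ p.2 ∧ p.2 ≤ lam p.1) ↔
          ((1 ≤ p.1 ∧ 1 ≤ p.2 ∧ p.2 ≤ lam' p.1) ∨
            (i1 ≤ p.1 ∧ p.1 ≤ i2 ∧ j1 ≤ p.2 ∧ p.2 ≤ j2))) ∧
      (∀ p : ℕ × ℕ,
        ¬((1 ≤ p.1 ∧ 1 ≤ p.2 ∧ p.2 ≤ lam' p.1) ∧
          (i1 ≤ p.1 ∧ p.1 ≤ i2 ∧ j1 ≤ p.2 ∧ p.2 ≤ j2))) ∧
      (∀ r r' : ℕ → ℕ → ℕ, IsShifts lam r → IsShifts lam' r' →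
        ∀ i j, 1 ≤ i → 1 ≤ j → j ≤ lam' i → r' i j = r i j) := by
  have h1 := hY.1
  have hnk' := hY.2.1
  have h2 := hY.2.2
  obtain ⟨i0, hi01, hi0l⟩ := hne
  have hik0 : i0 ≤ k := by by_contra h; have := h2 i0 (by omega); omega
  -- the set of "corner" rows
  have hDne : ((Finset.Icc 1 k).filter fun c => 1 ≤ lam c ∧ lam (c + 1) < lam c).Nonempty := by
    have hNne : ((Finset.Icc 1 k).filter fun i => 1 ≤ lam i).Nonempty :=
      ⟨i0, Finset.mem_filter.mpr ⟨Finset.mem_Icc.mpr ⟨hi01, hik0⟩, hi0l⟩⟩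
    obtain ⟨b0, hb0m, hb0max⟩ := Finset.exists_max_image _ (fun i => i) hNne
    simp only [Finset.mem_filter, Finset.mem_Icc] at hb0m
    have hb0s : lam (b0 + 1) = 0 := by
      by_contra h
      have hk1 : b0 + 1 ≤ k := by by_contra h'; have := h2 (b0 + 1) (by omega); omega
      have hm : b0 + 1 ∈ (Finset.Icc 1 k).filter fun i => 1 ≤ lam i :=
        Finset.mem_filter.mpr ⟨Finset.mem_Icc.mpr ⟨by omega, hk1⟩, by omega⟩
      have := hb0max _ hm
      omega
    exact ⟨b0, Finset.mem_filter.mpr ⟨Finset.mem_Icc.mpr ⟨by omega, by omega⟩, by omega, by omega⟩⟩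
  -- choose the corner b minimizing b + lam b
  obtain ⟨b, hbD, hbmin⟩ := Finset.exists_min_image _ (fun c => c + lam c) hDne
  simp only [Finset.mem_filter, Finset.mem_Icc] at hbD
  obtain ⟨⟨hb1, hbk⟩, hbl, hbs⟩ := hbD
  have hbmin' : ∀ c, 1 ≤ c → c ≤ k → 1 ≤ lam c → lam (c + 1) < lam c →
      b + lam b ≤ c + lam c := by
    intro c hc1 hc2 hc3 hc4
    exact hbmin c (Finset.mem_filter.mpr ⟨Finset.mem_Icc.mpr ⟨hc1, hc2⟩, hc3, hc4⟩)
  -- i1 : top of the block of rows equal to lam b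
  have hTne : ((Finset.Icc 1 b).filter fun i => lam i = lam b).Nonempty :=
    ⟨b, Finset.mem_filter.mpr ⟨Finset.mem_Icc.mpr ⟨hb1, le_rfl⟩, rfl⟩⟩
  obtain ⟨i1, hi1m, hi1min⟩ := Finset.exists_min_image _ (fun i => i) hTne
  simp only [Finset.mem_filter, Finset.mem_Icc] at hi1m
  obtain ⟨⟨hi11, hi1b⟩, hi1l⟩ := hi1m
  have hblock : ∀ i, i1 ≤ i → i ≤ b → lam i = lam b := by
    intro i hA hB
    have hle1 : lam i ≤ lam i1 := lam_anti h1 hi11 hA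
    have hle2 : lam b ≤ lam i := lam_anti h1 (by omega) hB
    omega
  have habove : ∀ i, 1 ≤ i → i < i1 → lam b < lam i := by
    intro i hA hB
    have hge : lam b ≤ lam i := lam_anti h1 hA (by omega)
    rcases Nat.lt_or_ge (lam b) (lam i) with h | h
    · exact h
    · have hm : i ∈ (Finset.Icc 1 b).filter fun i => lam i = lam b :=
        Finset.mem_filter.mpr ⟨Finset.mem_Icc.mpr ⟨hA, by omega⟩, by omega⟩
      have := hi1min _ hm
      omega
  set lam' : ℕ → ℕ := fun i => if i1 ≤ i ∧ i ≤ b then lam (b + 1) else lam i with hlam'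
  have hlam'def : ∀ i, lam' i = if i1 ≤ i ∧ i ≤ b then lam (b + 1) else lam i :=
    fun i => rfl
  have hle' : ∀ i, lam' i ≤ lam i := by
    intro i
    rw [hlam'def]
    split
    · next h => have := hblock i h.1 h.2; omega
    · exact le_rfl
  have hY' : IsYoung n k lam' := by
    refine ⟨?_, ?_, ?_⟩
    · intro i hi
      rw [hlam'def, hlam'def]
      by_cases ha : i1 ≤ i ∧ i ≤ b
      · rw [if_pos ha]
        by_cases hb' : i1 ≤ i + 1 ∧ i + 1 ≤ b
        · rw [if_pos hb']
        · rw [if_neg hb']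
          have : i = b := by omega
          rw [this]
      · rw [if_neg ha]
        by_cases hb' : i1 ≤ i + 1 ∧ i + 1 ≤ b
        · rw [if_pos hb']
          have := lam_anti h1 hi (show i ≤ b by omega)
          omega
        · rw [if_neg hb']
          exact h1 i hi
    · have := hle' 1
      omega
    · intro i hik
      have := hle' i
      have := h2 i hik
      omega
  refine ⟨lam', i1, b, lam (b + 1) + 1, lam b, hY', hi11, hi1b, by omega, by omega,
    ?_, ?_, ?_⟩
  · intro p
    rw [hlam'def]
    by_cases hp : i1 ≤ p.1 ∧ p.1 ≤ b
    · rw [if_pos hp]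
      have := hblock p.1 hp.1 hp.2
      omega
    · rw [if_neg hp]
      omega
  · intro p
    rw [hlam'def]
    by_cases hp : i1 ≤ p.1 ∧ p.1 ≤ b
    · rw [if_pos hp]; omega
    · rw [if_neg hp]; omega
  · intro r r' hr hr' i j hi hj hjl
    have e1 : r i j = Rsh k lam i j :=
      shifts_unique hY hr (Rsh_shifts k lam h1 h2) i j
    have e2 : r' i j = Rsh k lam' i j :=
      shifts_unique hY' hr' (Rsh_shifts k lam' hY'.1 hY'.2.2) i j
    rw [e1, e2]
    apply le_antisymm
    · apply Rsh_le
      intro i' hii' hik' hji'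
      have hl2 : lam' i' ≤ lam i' := hle' i'
      have := le_Rsh k lam hi hj hii' hik' (by omega)
      omega
    · apply Rsh_le
      intro i' hii' hik' hji'
      by_cases hblk : i1 ≤ i' ∧ i' ≤ b
      · have hli' : lam i' = lam b := hblock i' hblk.1 hblk.2
        by_cases hjb : j ≤ lam (b + 1)
        · -- use the next corner c strictly below b
          have hbk1 : b + 1 ≤ k := by
            by_contra h; have := h2 (b + 1) (by omega); omega
          have hmem : b + 1 ∈ (Finset.Icc 1 k).filter fun c => j ≤ lam c :=
            Finset.mem_filter.mpr ⟨Finset.mem_Icc.mpr ⟨by omega, hbk1⟩, by omega⟩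
          obtain ⟨c, hcmem, hcmax⟩ :=
            Finset.exists_max_image _ (fun c => c) (⟨_, hmem⟩ :
              ((Finset.Icc 1 k).filter fun c => j ≤ lam c).Nonempty)
          have hcb : b + 1 ≤ c := hcmax _ hmem
          simp only [Finset.mem_filter, Finset.mem_Icc] at hcmem
          have hc1 : lam (c + 1) < j := by
            by_contra h
            have hck : c + 1 ≤ k := by
              by_contra h'; have := h2 (c + 1) (by omega); omega
            have hm2 : c + 1 ∈ (Finset.Icc 1 k).filter fun c => j ≤ lam c :=
              Finset.mem_filter.mpr ⟨Finset.mem_Icc.mpr ⟨by omega, hck⟩, by omega⟩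
            have := hcmax _ hm2
            omega
          have hmin2 : b + lam b ≤ c + lam c :=
            hbmin' c (by omega) hcmem.1.2 (by omega) (by omega)
          have hlc : lam' c = lam c := by rw [hlam'def, if_neg (by omega)]
          have := le_Rsh k lam' hi hj (show i ≤ c by omega) hcmem.1.2
            (show j ≤ lam' c by omega)
          omega
        · -- use the row i1 - 1 just above the block
          have hiblock : ¬(i1 ≤ i ∧ i ≤ b) := by
            intro h
            rw [hlam'def, if_pos h] at hjl
            omega
          have hii1 : i < i1 := by omega
          have hdl : lam b < lam (i1 - 1) := habove (i1 - 1) (by omega) (by omega)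
          have hdk : i1 - 1 ≤ k := by
            by_contra h; have := h2 (i1 - 1) (by omega); omega
          have hds : lam (i1 - 1 + 1) = lam b := by
            rw [show i1 - 1 + 1 = i1 by omega]; exact hi1l
          have hmin2 : b + lam b ≤ (i1 - 1) + lam (i1 - 1) :=
            hbmin' (i1 - 1) (by omega) hdk (by omega) (by omega)
          have hld : lam' (i1 - 1) = lam (i1 - 1) := by
            rw [hlam'def, if_neg (by omega)]
          have := le_Rsh k lam' hi hj (show i ≤ i1 - 1 by omega) hdk
            (show j ≤ lam' (i1 - 1) by omega)
          omega
      · have hlc : lam' i' = lam i' := by rw [hlam'def, if_neg hblk]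
        have := le_Rsh k lam' hi hj hii' hik' (by omega)
        omega

end
end
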